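/- Menon's multiplicativity lemma: If f is a multiplicative arithmetic function of r variables and P₁,…,P_r ∈ ℤ[x], then F(n) := ∑_{a=1}^{n} f(gcd(P₁(a),n), …, gcd(P_r(a),n)) is a multiplicative function of n. -/

import Mathlib

/-- A function of `r` natural-number variables is multiplicative. -/
def IsMultiplicativeK (r : ℕ) (f : (Fin r → ℕ) → ℂ) : Prop :=
  f (fun _ => 1) = 1 ∧
    ∀ m n : Fin r → ℕ, Nat.Coprime (∏ i, m i) (∏ i, n i) →
      f (fun i => m i * n i) = f m * f n

/-- Menon's sum `F(n) = ∑_{a=1}^n f(gcd(P₁(a),n), …, gcd(P_r(a),n))`. -/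
noncomputable def menonF (r : ℕ) (f : (Fin r → ℕ) → ℂ) (P : Fin r → Polynomial ℤ)
    (n : ℕ) : ℂ :=
  ∑ a ∈ Finset.Icc 1 n, f (fun i => Int.gcd ((P i).eval (a : ℤ)) (n : ℤ))

private lemma gcd_congr_aux (n : ℕ) {a b : ℤ} (h : (n : ℤ) ∣ a - b) :
    Int.gcd a n ∣ Int.gcd b n := by
  refine Int.natCast_dvd_natCast.mp (Int.dvd_coe_gcd ?_ (Int.gcd_dvd_right _ _))
  have h1 : (Int.gcd a n : ℤ) ∣ a := Int.gcd_dvd_left _ _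
  have h2 : (Int.gcd a n : ℤ) ∣ a - b := (Int.gcd_dvd_right _ _).trans h
  simpa using h1.sub h2

private lemma gcd_congr (n : ℕ) {a b : ℤ} (h : (n : ℤ) ∣ a - b) :
    Int.gcd a n = Int.gcd b n :=
  Nat.dvd_antisymm (gcd_congr_aux n h)
    (gcd_congr_aux n (by simpa [neg_sub] using h.neg_right))

private lemma gcd_eval_congr (p : Polynomial ℤ) (n : ℕ) {a b : ℤ}
    (h : (n : ℤ) ∣ a - b) : Int.gcd (p.eval a) n = Int.gcd (p.eval b) n :=
  gcd_congr n (dvd_trans h (Polynomial.sub_dvd_eval_sub a b p))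

theorem menon_multiplicativity_lemma (r : ℕ) (f : (Fin r → ℕ) → ℂ)
    (hf : IsMultiplicativeK r f) (P : Fin r → Polynomial ℤ) :
    menonF r f P 1 = 1 ∧
      ∀ m n : ℕ, 0 < m → 0 < n → Nat.Coprime m n →
        menonF r f P (m * n) = menonF r f P m * menonF r f P n := by
  obtain ⟨hf1, hfm⟩ := hf
  constructor
  · simp [menonF, hf1]
  intro m n hm hn hmn
  -- Rewrite the Menon sums as sums over `ZMod`.
  have key : ∀ (N : ℕ) [NeZero N], menonF r f P N =
      ∑ z : ZMod N, f (fun i => Int.gcd ((P i).eval ((ZMod.val z : ℕ) : ℤ)) (N : ℤ)) := by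
    intro N _
    have hN : 0 < N := Nat.pos_of_ne_zero (NeZero.ne N)
    rw [menonF]
    refine Finset.sum_nbij' (fun a => (a : ZMod N))
      (fun z => if z.val = 0 then N else z.val) (fun a _ => Finset.mem_univ _)
      ?_ ?_ ?_ ?_
    · intro z _
      by_cases hz : z.val = 0
      · simp only [hz, if_true, Finset.mem_Icc]
        omega
      · simp only [hz, if_false, Finset.mem_Icc]
        exact ⟨Nat.one_le_iff_ne_zero.mpr hz, (ZMod.val_lt z).le⟩
    · intro a ha
      rw [Finset.mem_Icc] at ha
      rcases eq_or_lt_of_le ha.2 with h | h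
      · subst h
        simp [ZMod.natCast_self]
      · have ha0 : a ≠ 0 := Nat.one_le_iff_ne_zero.mp ha.1
        simp only [ZMod.val_natCast_of_lt h, ha0, if_false]
    · intro z _
      by_cases hz : z.val = 0
      · have : z = 0 := by
          rwa [← ZMod.val_eq_zero]
        simp [hz, this]
      · simp only [hz, if_false]
        exact ZMod.natCast_rightInverse z
    · intro a ha
      congr 1
      funext i
      refine gcd_eval_congr (P i) N ?_
      rw [ZMod.val_natCast]
      push_cast [Int.natCast_mod]
      exact Int.dvd_self_sub_of_emod_eq rfl
  haveI : NeZero m := ⟨hm.ne'⟩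
  haveI : NeZero n := ⟨hn.ne'⟩
  haveI : NeZero (m * n) := ⟨(Nat.mul_pos hm hn).ne'⟩
  rw [key m, key n, key (m * n)]
  rw [Finset.sum_mul_sum]
  rw [← Fintype.sum_prod_type']
  -- now use CRT
  refine Fintype.sum_equiv (ZMod.chineseRemainder hmn).toEquiv _ _ ?_
  intro z
  have hcast : (ZMod.chineseRemainder hmn).toEquiv z = ((z.val : ℕ) : ZMod m × ZMod n) := by
    show ((ZMod.castHom (show Nat.lcm m n ∣ m * n by simp [Nat.lcm_dvd_iff]) (ZMod m × ZMod n)) z) = _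
    rw [ZMod.castHom_apply]
    exact (ZMod.natCast_val z).symm
  have hfst : ((ZMod.chineseRemainder hmn).toEquiv z).1 = ((z.val : ℕ) : ZMod m) := by
    rw [hcast, Prod.fst_natCast]
  have hsnd : ((ZMod.chineseRemainder hmn).toEquiv z).2 = ((z.val : ℕ) : ZMod n) := by
    rw [hcast, Prod.snd_natCast]
  -- divisibility facts for gcd congruence
  have hdvd : ∀ (k : ℕ) [NeZero k], ∀ w : ℕ,
      (k : ℤ) ∣ ((w : ℤ) - (((w : ZMod k).val : ℕ) : ℤ)) := by
    intro k _ w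
    rw [ZMod.val_natCast]
    push_cast [Int.natCast_mod]
    exact Int.dvd_self_sub_of_emod_eq rfl
  -- split the gcd at m*n
  have hsplit : ∀ k : ℤ, Int.gcd k ((m * n : ℕ) : ℤ) = Int.gcd k (m : ℤ) * Int.gcd k (n : ℤ) := by
    intro k
    show Nat.gcd k.natAbs ((m * n : ℕ) : ℤ).natAbs = _
    rw [Int.natAbs_natCast]
    rw [Nat.Coprime.gcd_mul _ hmn]
    rfl
  have hcop : Nat.Coprime (∏ i, Int.gcd ((P i).eval ((z.val : ℕ) : ℤ)) (m : ℤ))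
      (∏ i, Int.gcd ((P i).eval ((z.val : ℕ) : ℤ)) (n : ℤ)) := by
    have h1 : (∏ i, Int.gcd ((P i).eval ((z.val : ℕ) : ℤ)) (m : ℤ)) ∣ m ^ r := by
      calc (∏ i, Int.gcd ((P i).eval ((z.val : ℕ) : ℤ)) (m : ℤ)) ∣ ∏ _i : Fin r, m :=
            Finset.prod_dvd_prod_of_dvd _ _ (fun i _ => Int.natCast_dvd_natCast.mp (Int.gcd_dvd_right _ _))
        _ = m ^ r := by simp
    have h2 : (∏ i, Int.gcd ((P i).eval ((z.val : ℕ) : ℤ)) (n : ℤ)) ∣ n ^ r := by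
      calc (∏ i, Int.gcd ((P i).eval ((z.val : ℕ) : ℤ)) (n : ℤ)) ∣ ∏ _i : Fin r, n :=
            Finset.prod_dvd_prod_of_dvd _ _ (fun i _ => Int.natCast_dvd_natCast.mp (Int.gcd_dvd_right _ _))
        _ = n ^ r := by simp
    exact Nat.Coprime.coprime_dvd_left h1 (Nat.Coprime.coprime_dvd_right h2 (Nat.Coprime.pow r r hmn))
  push_cast [Nat.cast_mul] at *
  calc f (fun i => Int.gcd ((P i).eval ((z.val : ℕ) : ℤ)) ((m : ℤ) * (n : ℤ)))
      = f (fun i => Int.gcd ((P i).eval ((z.val : ℕ) : ℤ)) (m : ℤ) *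
            Int.gcd ((P i).eval ((z.val : ℕ) : ℤ)) (n : ℤ)) := by
        congr 1; funext i
        have := hsplit ((P i).eval ((z.val : ℕ) : ℤ))
        push_cast at this
        exact this
    _ = f (fun i => Int.gcd ((P i).eval ((z.val : ℕ) : ℤ)) (m : ℤ)) *
          f (fun i => Int.gcd ((P i).eval ((z.val : ℕ) : ℤ)) (n : ℤ)) := hfm _ _ hcop
    _ = _ := by
        congr 1
        · congr 1; funext i
          rw [hfst]
          exact gcd_eval_congr (P i) m (hdvd m z.val)
        · congr 1; funext i
          rw [hsnd]
          exact gcd_eval_congr (P i) n (hdvd n z.val)
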